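/- The word w_o is boundedly concise in the class of residually finite groups: there is a function f such that if G is a residually finite group in which w_o takes at most m values, then the verbal subgroup w_o(G) is finite of order at most f(m). -/

import Mathlib

open scoped commutatorElement

/-- The auxiliary word `v(x,y) = [[x^d, y^d]^d, [y^d, x^{-d}]^d]`. -/
def vWord {G : Type*} [Group G] (d : ℕ) (x y : G) : G :=
  ⁅⁅x ^ d, y ^ d⁆ ^ d, ⁅y ^ d, (x⁻¹) ^ d⁆ ^ d⁆

/-- The signs `ε_i` in Olshanskii's word, with `ε_0 = 1`. -/
def eps (i : ℕ) : ℤ :=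
  if i = 0 ∨ i % 10 = 1 ∨ i % 10 = 2 ∨ i % 10 = 3 ∨ i % 10 = 5 ∨ i % 10 = 6 then 1 else -1

/-- Olshanskii's word
`w_o(x,y) = [x,y] v(x,y)^n [x,y]^{ε_1} v(x,y)^{n+1} ⋯ [x,y]^{ε_{h-1}} v(x,y)^{n+h-1}`. -/
def wo {G : Type*} [Group G] (d n h : ℕ) (x y : G) : G :=
  ((List.range h).map fun i => ⁅x, y⁆ ^ eps i * vWord d x y ^ (n + i)).prod

/-- The set of `w_o`-values in `G`. -/
def woValues (G : Type*) [Group G] (d n h : ℕ) : Set G :=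
  {g : G | ∃ x y : G, wo d n h x y = g}

/-- A group is residually finite if every nontrivial element survives in some finite
quotient, i.e. avoids some normal subgroup of finite index. -/
def ResiduallyFinite (G : Type*) [Group G] : Prop :=
  ∀ g : G, g ≠ 1 → ∃ N : Subgroup G, N.Normal ∧ N.FiniteIndex ∧ g ∉ N

/-! ### Basic lemmas about the word `wo` -/

section WordBasics

variable {G H : Type*} [Group G] [Group H] (d n h : ℕ)

theorem vWord_map (φ : G →* H) (x y : G) : φ (vWord d x y) = vWord d (φ x) (φ y) := by
  simp [vWord, map_commutatorElement, map_pow, map_inv]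

theorem wo_map (φ : G →* H) (x y : G) : φ (wo d n h x y) = wo d n h (φ x) (φ y) := by
  unfold wo
  rw [map_list_prod, List.map_map]
  congr 1
  apply List.map_congr_left
  intro i _
  simp [map_mul, map_zpow, map_pow, vWord_map, map_commutatorElement]

theorem wo_one : wo d n h (1 : G) 1 = 1 := by
  apply List.prod_eq_one
  intro x hx
  simp only [List.mem_map] at hx
  obtain ⟨i, -, rfl⟩ := hx
  simp [vWord]

theorem one_mem_woValues : (1 : G) ∈ woValues G d n h :=
  ⟨1, 1, wo_one d n h⟩

theorem conj_mem_woValues {a : G} (ha : a ∈ woValues G d n h) (g : G) :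
    g * a * g⁻¹ ∈ woValues G d n h := by
  obtain ⟨x, y, rfl⟩ := ha
  refine ⟨g * x * g⁻¹, g * y * g⁻¹, ?_⟩
  have := wo_map d n h ((MulAut.conj g).toMonoidHom) x y
  simpa using this.symm

theorem woValues_image_surjective (φ : G →* H) (hφ : Function.Surjective φ) :
    woValues H d n h = φ '' woValues G d n h := by
  ext z
  constructor
  · rintro ⟨u, v, rfl⟩
    obtain ⟨x, rfl⟩ := hφ u
    obtain ⟨y, rfl⟩ := hφ v
    exact ⟨wo d n h x y, ⟨x, y, rfl⟩, wo_map d n h φ x y⟩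
  · rintro ⟨w, ⟨x, y, rfl⟩, rfl⟩
    exact ⟨φ x, φ y, (wo_map d n h φ x y).symm⟩

theorem woValues_subset_commutator :
    woValues G d n h ⊆ (_root_.commutator G : Set G) := by
  rintro z ⟨x, y, rfl⟩
  apply Subgroup.list_prod_mem
  intro w hw
  simp only [List.mem_map] at hw
  obtain ⟨i, -, rfl⟩ := hw
  have h1 : ⁅x, y⁆ ∈ _root_.commutator G :=
    Subgroup.commutator_mem_commutator (Subgroup.mem_top x) (Subgroup.mem_top y)
  have h2 : vWord d x y ∈ _root_.commutator G :=
    Subgroup.commutator_mem_commutator (Subgroup.mem_top _) (Subgroup.mem_top _)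
  exact mul_mem (zpow_mem h1 _) (pow_mem h2 _)

end WordBasics

/-! ### The sum of the signs -/

theorem eps_eval (i : ℕ) (hi : i ≠ 0) :
    eps i = if i % 10 = 1 ∨ i % 10 = 2 ∨ i % 10 = 3 ∨ i % 10 = 5 ∨ i % 10 = 6
      then 1 else -1 := by
  simp [eps, hi]

theorem eps_of_mod (i r : ℕ) (hi : i ≠ 0) (hr : i % 10 = r) :
    eps i = if r = 1 ∨ r = 2 ∨ r = 3 ∨ r = 5 ∨ r = 6 then 1 else -1 := by
  subst hr; simp [eps, hi]

theorem eps_sum_aux (k : ℕ) : ((List.range (10 * k + 1)).map eps).sum = 1 := by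
  induction k with
  | zero => simp [List.range_succ, eps]
  | succ k ih =>
    have hstep : ∀ j : ℕ, ((List.range (j + 1)).map eps).sum
        = ((List.range j).map eps).sum + eps j := by
      intro j
      rw [List.range_succ]
      simp
    have h10 : 10 * (k + 1) + 1 = (10 * k + 1) + 10 := by ring
    rw [h10]
    rw [show (10 * k + 1) + 10 = ((10*k+1)+9)+1 from rfl, hstep]
    rw [show (10 * k + 1) + 9 = ((10*k+1)+8)+1 from rfl, hstep]
    rw [show (10 * k + 1) + 8 = ((10*k+1)+7)+1 from rfl, hstep]
    rw [show (10 * k + 1) + 7 = ((10*k+1)+6)+1 from rfl, hstep]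
    rw [show (10 * k + 1) + 6 = ((10*k+1)+5)+1 from rfl, hstep]
    rw [show (10 * k + 1) + 5 = ((10*k+1)+4)+1 from rfl, hstep]
    rw [show (10 * k + 1) + 4 = ((10*k+1)+3)+1 from rfl, hstep]
    rw [show (10 * k + 1) + 3 = ((10*k+1)+2)+1 from rfl, hstep]
    rw [show (10 * k + 1) + 2 = ((10*k+1)+1)+1 from rfl, hstep]
    rw [show (10 * k + 1) + 1 = (10*k+1)+1 from rfl, hstep]
    rw [ih]
    have e0 : eps (10*k+1) = 1 := by
      rw [eps_of_mod _ 1 (by omega) (by omega)]; decide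
    have e1 : eps (10*k+1+1) = 1 := by
      rw [eps_of_mod _ 2 (by omega) (by omega)]; decide
    have e2 : eps (10*k+1+2) = 1 := by
      rw [eps_of_mod _ 3 (by omega) (by omega)]; decide
    have e3 : eps (10*k+1+3) = -1 := by
      rw [eps_of_mod _ 4 (by omega) (by omega)]; decide
    have e4 : eps (10*k+1+4) = 1 := by
      rw [eps_of_mod _ 5 (by omega) (by omega)]; decide
    have e5 : eps (10*k+1+5) = 1 := by
      rw [eps_of_mod _ 6 (by omega) (by omega)]; decide
    have e6 : eps (10*k+1+6) = -1 := by
      rw [eps_of_mod _ 7 (by omega) (by omega)]; decide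
    have e7 : eps (10*k+1+7) = -1 := by
      rw [eps_of_mod _ 8 (by omega) (by omega)]; decide
    have e8 : eps (10*k+1+8) = -1 := by
      rw [eps_of_mod _ 9 (by omega) (by omega)]; decide
    have e9 : eps (10*k+1+9) = -1 := by
      rw [eps_of_mod _ 0 (by omega) (by omega)]; decide
    rw [e0, e1, e2, e3, e4, e5, e6, e7, e8, e9]
    ring

theorem eps_sum {h : ℕ} (hh : h % 10 = 1) : ((List.range h).map eps).sum = 1 := by
  have : h = 10 * (h / 10) + 1 := by omega
  rw [this]
  exact eps_sum_aux _

/-! ### The metabelian identity : in a metabelian group, `wo x y = ⁅x, y⁆`. -/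

section Metabelian

variable {G : Type*} [Group G]

theorem prod_map_zpow (c : G) (l : List ℕ) :
    (l.map fun i => c ^ eps i).prod = c ^ (l.map eps).sum := by
  induction l with
  | nil => simp
  | cons a l ih => simp [ih, zpow_add]

theorem vWord_eq_one (hm : ∀ a b c e : G, Commute ⁅a, b⁆ ⁅c, e⁆) (d : ℕ) (x y : G) :
    vWord d x y = 1 :=
  commutatorElement_eq_one_iff_commute.mpr ((hm _ _ _ _).pow_pow d d)

theorem wo_eq_commutator (hm : ∀ a b c e : G, Commute ⁅a, b⁆ ⁅c, e⁆)
    {d n h : ℕ} (hh : h % 10 = 1) (x y : G) : wo d n h x y = ⁅x, y⁆ := by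
  unfold wo
  rw [vWord_eq_one hm]
  simp only [one_pow, mul_one]
  rw [prod_map_zpow, eps_sum hh, zpow_one]

end Metabelian

/-! ### Conjugate subgroups -/

section ConjS

variable {Q : Type*} [Group Q]

/-- The conjugate subgroup `g M g⁻¹`. -/
def conjS (g : Q) (M : Subgroup Q) : Subgroup Q := M.map (MulAut.conj g).toMonoidHom

theorem mem_conjS {g x : Q} {M : Subgroup Q} : x ∈ conjS g M ↔ g⁻¹ * x * g ∈ M := by
  constructor
  · rintro ⟨y, hy, rfl⟩
    have h0 : (MulAut.conj g).toMonoidHom y = g * y * g⁻¹ := rfl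
    rw [h0]
    have : g⁻¹ * (g * y * g⁻¹) * g = y := by group
    rwa [this]
  · intro hx
    refine ⟨g⁻¹ * x * g, hx, ?_⟩
    show g * (g⁻¹ * x * g) * g⁻¹ = x
    group

theorem conjS_conjS {a b : Q} {M : Subgroup Q} : conjS a (conjS b M) = conjS (a * b) M := by
  ext x
  simp only [mem_conjS]
  constructor <;> intro hx
  · have : (a * b)⁻¹ * x * (a * b) = b⁻¹ * (a⁻¹ * x * a) * b := by group
    rwa [this]
  · have : b⁻¹ * (a⁻¹ * x * a) * b = (a * b)⁻¹ * x * (a * b) := by group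
    rwa [this]

theorem conjS_one {M : Subgroup Q} : conjS 1 M = M := by
  ext x; simp [mem_conjS]

theorem card_conjS {g : Q} {M : Subgroup Q} : Nat.card (conjS g M) = Nat.card M :=
  (Nat.card_congr (M.equivMapOfInjective _ (MulEquiv.injective _)).toEquiv).symm

theorem conjS_mono {g : Q} {M N : Subgroup Q} (hMN : M ≤ N) : conjS g M ≤ conjS g N :=
  Subgroup.map_mono hMN

theorem conjS_top {g : Q} : conjS g (⊤ : Subgroup Q) = ⊤ := by
  ext x; simp [mem_conjS]

theorem conjS_lt {g : Q} {M N : Subgroup Q} (hMN : M < N) : conjS g M < conjS g N := by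
  refine lt_of_le_of_ne (conjS_mono hMN.le) (fun heq => hMN.ne ?_)
  have := congrArg (conjS g⁻¹) heq
  rwa [conjS_conjS, conjS_conjS, inv_mul_cancel, conjS_one, conjS_one] at this

theorem conjS_eq_self_iff {g : Q} {M : Subgroup Q} :
    conjS g M = M ↔ g ∈ Subgroup.normalizer (M : Set Q) := by
  constructor
  · intro heq
    rw [Subgroup.mem_normalizer_iff]
    intro t
    constructor
    · intro ht
      have : g * t * g⁻¹ ∈ conjS g M := by
        rw [mem_conjS]
        have : g⁻¹ * (g * t * g⁻¹) * g = t := by group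
        rwa [this]
      rwa [heq] at this
    · intro ht
      rw [← heq, mem_conjS] at ht
      have h2 : g⁻¹ * (g * t * g⁻¹) * g = t := by group
      rwa [h2] at ht
  · intro hg
    ext x
    rw [mem_conjS]
    rw [Subgroup.mem_normalizer_iff] at hg
    have h3 := hg (g⁻¹ * x * g)
    have h2 : g * (g⁻¹ * x * g) * g⁻¹ = x := by group
    rw [h2] at h3
    exact h3

end ConjS

/-! ### The union of the conjugates of a self-normalizing subgroup -/

theorem exists_orbit_finset {Q : Type*} [Group Q] [Fintype Q] (M : Subgroup Q)
    (hnorm : Subgroup.normalizer (M : Set Q) = M)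
    (hdisj : ∀ K K' : Subgroup Q, (∃ g, conjS g M = K) → (∃ g, conjS g M = K') → K ≠ K' →
      ∀ x, x ∈ K → x ∈ K' → x = 1) :
    ∃ U : Finset Q,
      (∀ x ∈ U, x ≠ 1 ∧ ∃ g : Q, x ∈ conjS g M) ∧
      (∀ x g, x ∈ conjS g M → x ≠ 1 → x ∈ U) ∧
      U.card = M.index * (Nat.card M - 1) := by
  classical
  -- the function sending a coset to the corresponding conjugate
  have hwd : ∀ a b : Q, QuotientGroup.leftRel M a b → conjS a M = conjS b M := by
    intro a b hab
    rw [QuotientGroup.leftRel_apply] at hab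
    have : conjS (a⁻¹ * b) M = M := conjS_eq_self_iff.mpr (by rw [hnorm]; exact hab)
    calc conjS a M = conjS a (conjS (a⁻¹ * b) M) := by rw [this]
    _ = conjS (a * (a⁻¹ * b)) M := conjS_conjS
    _ = conjS b M := by rw [mul_inv_cancel_left]
  haveI : Fintype (Q ⧸ M) := Fintype.ofFinite _
  let fQ : Q ⧸ M → Subgroup Q := fun q => Quotient.liftOn' q (fun g => conjS g M) hwd
  have hfQ : ∀ g : Q, fQ (QuotientGroup.mk g) = conjS g M := fun g => rfl
  have hfQinj : Function.Injective fQ := by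
    intro q q'
    induction q using Quotient.inductionOn'
    induction q' using Quotient.inductionOn'
    rename_i a b
    intro hab
    rw [hfQ, hfQ] at hab
    have : conjS (a⁻¹ * b) M = M := by
      rw [← conjS_conjS, ← hab, conjS_conjS, inv_mul_cancel, conjS_one]
    have hmem : a⁻¹ * b ∈ M := hnorm ▸ conjS_eq_self_iff.mp this
    exact (QuotientGroup.eq (s := M)).mpr hmem
  let orb : Finset (Subgroup Q) := Finset.image fQ Finset.univ
  have horb : ∀ K : Subgroup Q, K ∈ orb ↔ ∃ g : Q, conjS g M = K := by
    intro K
    simp only [orb, Finset.mem_image, Finset.mem_univ, true_and]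
    constructor
    · rintro ⟨q, hq⟩
      induction q using Quotient.inductionOn'
      rename_i a
      exact ⟨a, hq⟩
    · rintro ⟨g, hg⟩
      exact ⟨QuotientGroup.mk g, hg⟩
  have horbcard : orb.card = M.index := by
    rw [Finset.card_image_of_injective _ hfQinj, Finset.card_univ]
    rw [← Nat.card_eq_fintype_card]
    rfl
  refine ⟨orb.biUnion (fun K => (K : Set Q).toFinset.erase 1), ?_, ?_, ?_⟩
  · intro x hx
    simp only [Finset.mem_biUnion] at hx
    obtain ⟨K, hK, hxK⟩ := hx
    rw [Finset.mem_erase] at hxK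
    obtain ⟨g, rfl⟩ := (horb K).mp hK
    exact ⟨hxK.1, g, SetLike.mem_coe.mp (Set.mem_toFinset.mp hxK.2)⟩
  · intro x g hxg hx1
    simp only [Finset.mem_biUnion]
    exact ⟨conjS g M, (horb _).mpr ⟨g, rfl⟩,
      Finset.mem_erase.mpr ⟨hx1, Set.mem_toFinset.mpr hxg⟩⟩
  · rw [Finset.card_biUnion]
    · have : ∀ K ∈ orb, ((K : Set Q).toFinset.erase 1).card = Nat.card M - 1 := by
        intro K hK
        obtain ⟨g, rfl⟩ := (horb K).mp hK
        rw [Finset.card_erase_of_mem (Set.mem_toFinset.mpr (conjS g M).one_mem)]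
        rw [Set.toFinset_card]
        have h1 : Fintype.card ((conjS g M : Subgroup Q) : Set Q) = Nat.card (conjS g M) := by
          rw [Nat.card_eq_fintype_card]; rfl
        rw [h1, card_conjS]
      rw [Finset.sum_congr rfl this, Finset.sum_const, smul_eq_mul, horbcard]
    · intro K hK K' hK' hKK'
      rw [Function.onFun, Finset.disjoint_left]
      intro x hx hx'
      rw [Finset.mem_erase, Set.mem_toFinset] at hx hx'
      exact hx.1 (hdisj K K' ((horb K).mp hK) ((horb K').mp hK') hKK' x hx.2 hx'.2)

/-! ### Finite lattice helpers -/

section FiniteHelpers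

variable {Q : Type*} [Group Q] [Finite Q]

theorem subgroup_card_lt {S T : Subgroup Q} (hST : S < T) : Nat.card S < Nat.card T := by
  refine lt_of_le_of_ne (Subgroup.card_le_of_le hST.le) (fun heq => hST.ne ?_)
  apply SetLike.coe_injective
  apply Set.eq_of_subset_of_ncard_le hST.le
  rw [← Nat.card_coe_set_eq, ← Nat.card_coe_set_eq]
  exact le_of_eq (by exact heq.symm)

theorem exists_maximal_above (S : Subgroup Q) (hS : S ≠ ⊤) :
    ∃ M : Subgroup Q, S ≤ M ∧ M ≠ ⊤ ∧ ∀ U : Subgroup Q, M < U → U = ⊤ := by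
  classical
  haveI : Finite (Subgroup Q) :=
    Finite.of_injective (fun T : Subgroup Q => (T : Set Q)) SetLike.coe_injective
  have hfin : ({T : Subgroup Q | S ≤ T ∧ T ≠ ⊤}).Finite := Set.toFinite _
  obtain ⟨M, hMmem, hMmax⟩ := Set.Finite.exists_maximalFor (fun T : Subgroup Q => Nat.card T)
    _ hfin ⟨S, le_refl S, hS⟩
  refine ⟨M, hMmem.1, hMmem.2, ?_⟩
  intro U hU
  by_contra hUne
  have hUmem : U ∈ {T : Subgroup Q | S ≤ T ∧ T ≠ ⊤} := ⟨hMmem.1.trans hU.le, hUne⟩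
  have hlt := subgroup_card_lt hU
  have : Nat.card U ≤ Nat.card M := hMmax hUmem hlt.le
  omega

end FiniteHelpers

/-- A nonabelian finite group in which every normal subgroup is trivial and every
proper subgroup is abelian cannot exist. -/
theorem no_simple_all_abelian (Q : Type*) [Group Q] [Finite Q]
    (hnontriv : ∃ a b : Q, a * b ≠ b * a)
    (hsimple : ∀ N : Subgroup Q, N.Normal → N = ⊥ ∨ N = ⊤)
    (hproper : ∀ S : Subgroup Q, S ≠ ⊤ → ∀ a b : S, a * b = b * a) : False := by
  classical
  haveI : Fintype Q := Fintype.ofFinite Q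
  obtain ⟨a₀, b₀, hab₀⟩ := hnontriv
  have ha1 : a₀ ≠ 1 := by rintro rfl; simp at hab₀
  have hcenter : Subgroup.center Q = ⊥ := by
    rcases hsimple (Subgroup.center Q) inferInstance with hc | hc
    · exact hc
    · exfalso
      apply hab₀
      have hb : b₀ ∈ Subgroup.center Q := by rw [hc]; exact Subgroup.mem_top b₀
      exact Subgroup.mem_center_iff.mp hb a₀
  have hnoncyc : ∀ g : Q, Subgroup.zpowers g ≠ ⊤ := by
    intro g hg
    apply hab₀
    have ha : a₀ ∈ Subgroup.zpowers g := by rw [hg]; exact Subgroup.mem_top a₀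
    have hb : b₀ ∈ Subgroup.zpowers g := by rw [hg]; exact Subgroup.mem_top b₀
    obtain ⟨i, rfl⟩ := Subgroup.mem_zpowers_iff.mp ha
    obtain ⟨j, rfl⟩ := Subgroup.mem_zpowers_iff.mp hb
    rw [← zpow_add, ← zpow_add, add_comm]
  let IsMax : Subgroup Q → Prop := fun M => M ≠ ⊤ ∧ ∀ U : Subgroup Q, M < U → U = ⊤
  have hmax_ne_bot : ∀ M, IsMax M → M ≠ ⊥ := by
    intro M hM hbot
    have hlt : (⊥ : Subgroup Q) < Subgroup.zpowers a₀ := by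
      rw [bot_lt_iff_ne_bot]
      intro hz
      have hmem : a₀ ∈ Subgroup.zpowers a₀ := Subgroup.mem_zpowers a₀
      rw [hz] at hmem
      exact ha1 (Subgroup.mem_bot.mp hmem)
    rw [← hbot] at hlt
    exact hnoncyc a₀ (hM.2 _ hlt)
  have htriv : ∀ M M' : Subgroup Q, IsMax M → IsMax M' → M ≠ M' →
      ∀ x, x ∈ M → x ∈ M' → x = 1 := by
    intro M M' hM hM' hne x hxM hxM'
    by_contra hx1
    have hcent : ∀ N : Subgroup Q, IsMax N → x ∈ N → N = Subgroup.centralizer {x} := by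
      intro N hN hxN
      have hle : N ≤ Subgroup.centralizer {x} := by
        intro y hy
        rw [Subgroup.mem_centralizer_iff]
        intro z hz
        rw [Set.mem_singleton_iff] at hz
        subst hz
        have hcomm := hproper N hN.1 ⟨z, hxN⟩ ⟨y, hy⟩
        have := congrArg Subtype.val hcomm
        simpa using this
      have hcne : Subgroup.centralizer {x} ≠ ⊤ := by
        intro htop
        have hxc : x ∈ Subgroup.center Q := by
          rw [Subgroup.mem_center_iff]
          intro g
          have hg : g ∈ Subgroup.centralizer {x} := by rw [htop]; exact Subgroup.mem_top g
          rw [Subgroup.mem_centralizer_iff] at hg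
          exact (hg x rfl).symm
        rw [hcenter] at hxc
        exact hx1 (Subgroup.mem_bot.mp hxc)
      rcases eq_or_lt_of_le hle with heq | hlt
      · exact heq
      · exact absurd (hN.2 _ hlt) hcne
    exact hne ((hcent M hM hxM).trans (hcent M' hM' hxM').symm)
  have hselfnorm : ∀ M, IsMax M → Subgroup.normalizer (M : Set Q) = M := by
    intro M hM
    rcases eq_or_lt_of_le (Subgroup.le_normalizer (H := M)) with heq | hlt
    · exact heq.symm
    · exfalso
      have htop := hM.2 _ hlt
      have hnormal : M.Normal := Subgroup.normalizer_eq_top_iff.mp htop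
      rcases hsimple M hnormal with hc | hc
      · exact hmax_ne_bot M hM hc
      · exact hM.1 hc
  have hconjmax : ∀ (g : Q) (M : Subgroup Q), IsMax M → IsMax (conjS g M) := by
    intro g M hM
    constructor
    · intro htop
      apply hM.1
      have h2 := congrArg (conjS g⁻¹) htop
      rwa [conjS_conjS, inv_mul_cancel, conjS_one, conjS_top] at h2
    · intro U hU
      have hlt : M < conjS g⁻¹ U := by
        have h2 := conjS_lt (g := g⁻¹) hU
        rwa [conjS_conjS, inv_mul_cancel, conjS_one] at h2
      have h3 := hM.2 _ hlt
      have h4 := congrArg (conjS g) h3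
      rwa [conjS_conjS, mul_inv_cancel, conjS_one, conjS_top] at h4
  have hdisj : ∀ (M : Subgroup Q), IsMax M → ∀ K K' : Subgroup Q,
      (∃ g, conjS g M = K) → (∃ g, conjS g M = K') → K ≠ K' →
      ∀ x, x ∈ K → x ∈ K' → x = 1 := by
    rintro M hM K K' ⟨g, rfl⟩ ⟨g', rfl⟩ hKK' x hx hx'
    exact htriv _ _ (hconjmax g M hM) (hconjmax g' M hM) hKK' x hx hx'
  have hcard2 : ∀ M : Subgroup Q, IsMax M → 2 ≤ Nat.card M := by
    intro M hM
    have h2 := (Subgroup.one_lt_card_iff_ne_bot (H := M)).mpr (hmax_ne_bot M hM)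
    omega
  have hindex2 : ∀ M : Subgroup Q, IsMax M → 2 ≤ M.index := by
    intro M hM
    have h0 : M.index ≠ 0 := Subgroup.index_ne_zero_of_finite
    have h1 : M.index ≠ 1 := fun hc => hM.1 (Subgroup.index_eq_one.mp hc)
    omega
  have hUcardeq : ∀ M : Subgroup Q, IsMax M →
      M.index * (Nat.card M - 1) + M.index = Nat.card Q := by
    intro M hM
    have h1 : M.index * Nat.card M = Nat.card Q := Subgroup.index_mul_card M
    have h2 := hcard2 M hM
    have h3 : M.index * (Nat.card M - 1) + M.index * 1 = M.index * Nat.card M := by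
      rw [← Nat.mul_add]
      congr 1
      omega
    omega
  have hindexhalf : ∀ M : Subgroup Q, IsMax M → 2 * M.index ≤ Nat.card Q := by
    intro M hM
    have h1 : M.index * Nat.card M = Nat.card Q := Subgroup.index_mul_card M
    have h2 := hcard2 M hM
    calc 2 * M.index = M.index * 2 := by ring
    _ ≤ M.index * Nat.card M := Nat.mul_le_mul_left _ h2
    _ = Nat.card Q := h1
  -- first maximal subgroup
  obtain ⟨M₀, hM₀le, hM₀ne, hM₀max⟩ := exists_maximal_above (Subgroup.zpowers a₀) (hnoncyc a₀)
  have hM₀ : IsMax M₀ := ⟨hM₀ne, hM₀max⟩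
  obtain ⟨U₀, hU₀mem, hU₀all, hU₀card⟩ :=
    exists_orbit_finset M₀ (hselfnorm M₀ hM₀) (hdisj M₀ hM₀)
  have hq : Fintype.card Q = Nat.card Q := (Nat.card_eq_fintype_card).symm
  -- find an element outside the conjugates of M₀
  have hexists : ∃ g₁ : Q, g₁ ∉ insert (1 : Q) U₀ := by
    by_contra hcon
    push_neg at hcon
    have hsub : (Finset.univ : Finset Q) ⊆ insert (1 : Q) U₀ := fun g _ => hcon g
    have hc := Finset.card_le_card hsub
    rw [Finset.card_univ, hq] at hc
    have hc2 := Finset.card_insert_le (1 : Q) U₀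
    have h1 := hUcardeq M₀ hM₀
    have h2 := hindex2 M₀ hM₀
    omega
  obtain ⟨g₁, hg₁⟩ := hexists
  have hg₁ne : g₁ ≠ 1 := fun hc => hg₁ (by rw [hc]; exact Finset.mem_insert_self 1 U₀)
  have hg₁U₀ : g₁ ∉ U₀ := fun hc => hg₁ (Finset.mem_insert_of_mem hc)
  obtain ⟨M₁, hM₁le, hM₁ne, hM₁max⟩ := exists_maximal_above (Subgroup.zpowers g₁) (hnoncyc g₁)
  have hM₁ : IsMax M₁ := ⟨hM₁ne, hM₁max⟩
  have hg₁M₁ : g₁ ∈ M₁ := hM₁le (Subgroup.mem_zpowers g₁)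
  have hM₁notconj : ∀ g : Q, conjS g M₀ ≠ M₁ := by
    intro g hg
    apply hg₁U₀
    refine hU₀all g₁ g ?_ hg₁ne
    rw [hg]
    exact hg₁M₁
  obtain ⟨U₁, hU₁mem, hU₁all, hU₁card⟩ :=
    exists_orbit_finset M₁ (hselfnorm M₁ hM₁) (hdisj M₁ hM₁)
  have hU01 : Disjoint U₀ U₁ := by
    rw [Finset.disjoint_left]
    intro x hx0 hx1
    obtain ⟨hxne, g, hxg⟩ := hU₀mem x hx0
    obtain ⟨-, g', hxg'⟩ := hU₁mem x hx1
    have hne : conjS g M₀ ≠ conjS g' M₁ := by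
      intro heq
      apply hM₁notconj (g'⁻¹ * g)
      rw [← conjS_conjS, heq, conjS_conjS, inv_mul_cancel, conjS_one]
    exact hxne (htriv _ _ (hconjmax g M₀ hM₀) (hconjmax g' M₁ hM₁) hne x hxg hxg')
  have h1U : (1 : Q) ∉ U₀ ∪ U₁ := by
    intro hmem
    rcases Finset.mem_union.mp hmem with hc | hc
    · exact (hU₀mem 1 hc).1 rfl
    · exact (hU₁mem 1 hc).1 rfl
  have hfinal : (insert (1 : Q) (U₀ ∪ U₁)).card ≤ Nat.card Q := by
    have := Finset.card_le_card (Finset.subset_univ (insert (1 : Q) (U₀ ∪ U₁)))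
    rwa [Finset.card_univ, hq] at this
  rw [Finset.card_insert_of_notMem h1U, Finset.card_union_of_disjoint hU01] at hfinal
  have e0 := hUcardeq M₀ hM₀
  have e1 := hUcardeq M₁ hM₁
  have f0 := hindexhalf M₀ hM₀
  have f1 := hindexhalf M₁ hM₁
  omega

/-! ### Fact A: every finite group satisfying `wo ≡ 1` is abelian -/

section FactA

universe u

theorem wo_subgroup_eq_one {G : Type*} [Group G] {d n h : ℕ}
    (hwo : ∀ x y : G, wo d n h x y = 1) (S : Subgroup G) :
    ∀ x y : ↥S, wo d n h x y = 1 := by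
  intro x y
  have hcoe : ((wo d n h x y : ↥S) : G) = wo d n h (x : G) (y : G) :=
    wo_map d n h S.subtype x y
  have h1 : ((wo d n h x y : ↥S) : G) = 1 := by rw [hcoe]; exact hwo _ _
  exact Subtype.ext (by simpa using h1)

theorem factA_aux {d n h : ℕ} (hh : h % 10 = 1) :
    ∀ (k : ℕ) (Q : Type u) [Group Q] [Finite Q], Nat.card Q ≤ k →
      (∀ x y : Q, wo d n h x y = 1) → ∀ a b : Q, a * b = b * a := by
  intro k
  induction k with
  | zero =>
    intro Q _ _ hcard _ a b
    have := Nat.card_pos (α := Q)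
    omega
  | succ k ih =>
    intro Q _ _ hcard hwo a b
    by_cases habel : ∀ x y : Q, x * y = y * x
    · exact habel a b
    by_cases hcomm : _root_.commutator Q = ⊤
    · exfalso
      apply no_simple_all_abelian Q
      · push_neg at habel
        exact habel
      · intro N hN
        by_cases hbot : N = ⊥
        · left; exact hbot
        right
        by_contra hne
        haveI := hN
        have hcardq : Nat.card (Q ⧸ N) < Nat.card Q := by
          have h1 : Nat.card Q = Nat.card (Q ⧸ N) * Nat.card N :=
            Subgroup.card_eq_card_quotient_mul_card_subgroup N
          have h2 : 1 < Nat.card N := (Subgroup.one_lt_card_iff_ne_bot N).mpr hbot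
          have h3 : 0 < Nat.card (Q ⧸ N) := Nat.card_pos
          rw [h1]
          exact lt_mul_iff_one_lt_right h3 |>.mpr h2
        have hwoq : ∀ x y : Q ⧸ N, wo d n h x y = 1 := by
          intro x y
          obtain ⟨x, rfl⟩ := QuotientGroup.mk_surjective x
          obtain ⟨y, rfl⟩ := QuotientGroup.mk_surjective y
          have hmap := wo_map d n h (QuotientGroup.mk' N) x y
          rw [hwo x y, map_one] at hmap
          exact hmap.symm
        have habelq := ih (Q ⧸ N) (by omega) hwoq
        have hle : _root_.commutator Q ≤ N := by
          rw [commutator_def]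
          rw [Subgroup.commutator_le]
          intro p _ q _
          rw [← QuotientGroup.eq_one_iff]
          have hc : ((⁅p, q⁆ : Q) : Q ⧸ N) = ⁅(p : Q ⧸ N), (q : Q ⧸ N)⁆ :=
            map_commutatorElement (QuotientGroup.mk' N) p q
          rw [hc]
          exact commutatorElement_eq_one_iff_commute.mpr (habelq _ _)
        rw [hcomm] at hle
        exact hne (top_le_iff.mp hle)
      · intro S hSne p q
        have hcardS : Nat.card S < Nat.card Q := by
          have hlt := subgroup_card_lt (lt_top_iff_ne_top.mpr hSne)
          rwa [Subgroup.card_top] at hlt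
        exact ih ↥S (by omega) (wo_subgroup_eq_one hwo S) p q
    · -- the commutator subgroup is proper, hence abelian, hence `Q` is metabelian
      have hlt : Nat.card (_root_.commutator Q) < Nat.card Q := by
        have hlt := subgroup_card_lt (lt_top_iff_ne_top.mpr hcomm)
        rwa [Subgroup.card_top] at hlt
      have habelH := ih ↥(_root_.commutator Q) (by omega)
        (wo_subgroup_eq_one hwo (_root_.commutator Q))
      have hm : ∀ a b c e : Q, Commute ⁅a, b⁆ ⁅c, e⁆ := by
        intro a b c e
        have h1 : ⁅a, b⁆ ∈ _root_.commutator Q :=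
          Subgroup.commutator_mem_commutator (Subgroup.mem_top a) (Subgroup.mem_top b)
        have h2 : ⁅c, e⁆ ∈ _root_.commutator Q :=
          Subgroup.commutator_mem_commutator (Subgroup.mem_top c) (Subgroup.mem_top e)
        have hcomm2 := habelH ⟨_, h1⟩ ⟨_, h2⟩
        have := congrArg Subtype.val hcomm2
        exact (by simpa using this : ⁅a, b⁆ * ⁅c, e⁆ = ⁅c, e⁆ * ⁅a, b⁆)
      have hone : ⁅a, b⁆ = 1 := by
        rw [← wo_eq_commutator hm hh a b]
        exact hwo a b
      exact commutatorElement_eq_one_iff_commute.mp hone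

/-- Fact A: a finite group in which the word `w_o` is a law is abelian. -/
theorem factA {d n h : ℕ} (hh : h % 10 = 1) (Q : Type u) [Group Q] [Finite Q]
    (hwo : ∀ x y : Q, wo d n h x y = 1) : ∀ a b : Q, a * b = b * a :=
  factA_aux hh (Nat.card Q) Q le_rfl hwo

end FactA

/-! ### Commutators only depend on cosets of the center -/

section CenterCommutator

variable {G : Type*} [Group G]

theorem commutator_central_left {a b z : G} (hz : ∀ g : G, Commute z g) :
    ⁅a * z, b⁆ = ⁅a, b⁆ := by
  have h1 : (a * z) * b * (a * z)⁻¹ * b⁻¹ = a * (z * b * z⁻¹) * a⁻¹ * b⁻¹ := by group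
  have h2 : z * b * z⁻¹ = b := by rw [(hz b).eq]; group
  rw [commutatorElement_def, commutatorElement_def, h1, h2]

theorem commutator_central_right {a b w : G} (hw : ∀ g : G, Commute w g) :
    ⁅a, b * w⁆ = ⁅a, b⁆ := by
  have h1 : a * (b * w) * a⁻¹ * (b * w)⁻¹ = a * b * (w * a⁻¹ * w⁻¹) * b⁻¹ := by group
  have h2 : w * a⁻¹ * w⁻¹ = a⁻¹ := by rw [(hw a⁻¹).eq]; group
  rw [commutatorElement_def, commutatorElement_def, h1, h2]

theorem card_commutatorSet_le_index_center_sq (G : Type*) [Group G] [Finite G] :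
    Nat.card (commutatorSet G) ≤ (Subgroup.center G).index ^ 2 := by
  classical
  set Zc := Subgroup.center G
  let F : (G ⧸ Zc) × (G ⧸ Zc) → G := fun p => ⁅p.1.out, p.2.out⁆
  have hcomm : commutatorSet G = Set.range F := by
    ext g
    constructor
    · rintro ⟨a, b, rfl⟩
      refine ⟨(QuotientGroup.mk a, QuotientGroup.mk b), ?_⟩
      obtain ⟨z, hz⟩ := QuotientGroup.mk_out_eq_mul Zc a
      obtain ⟨w, hw⟩ := QuotientGroup.mk_out_eq_mul Zc b
      have hzc : ∀ g : G, Commute (z : G) g := fun g =>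
        (Subgroup.mem_center_iff.mp z.2 g).symm
      have hwc : ∀ g : G, Commute (w : G) g := fun g =>
        (Subgroup.mem_center_iff.mp w.2 g).symm
      show ⁅(QuotientGroup.mk a : G ⧸ Zc).out, (QuotientGroup.mk b : G ⧸ Zc).out⁆ = ⁅a, b⁆
      rw [hz, hw, commutator_central_left hzc, commutator_central_right hwc]
    · rintro ⟨p, rfl⟩
      exact ⟨p.1.out, p.2.out, rfl⟩
  rw [hcomm]
  have h1 : Set.range F = F '' Set.univ := (Set.image_univ).symm
  rw [h1]
  calc Nat.card (F '' Set.univ) ≤ Nat.card (Set.univ : Set ((G ⧸ Zc) × (G ⧸ Zc))) :=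
        Nat.card_image_le (Set.finite_univ)
  _ = Nat.card ((G ⧸ Zc) × (G ⧸ Zc)) := Nat.card_congr (Equiv.Set.univ _)
  _ = Nat.card (G ⧸ Zc) * Nat.card (G ⧸ Zc) := Nat.card_prod _ _
  _ = (Subgroup.center G).index ^ 2 := by
        rw [sq]
        rfl

end CenterCommutator

/-! ### Index of a finite infimum of subgroups -/

theorem index_finset_inf_le {G : Type*} [Group G] {α : Type*} [DecidableEq α]
    (s : Finset α) (f : α → Subgroup G) (b : ℕ) (hb : ∀ a ∈ s, (f a).index ≤ b) :
    (s.inf f).index ≤ b ^ s.card := by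
  classical
  induction s using Finset.induction_on with
  | empty => simp [Subgroup.index_top]
  | insert a t hnotmem ih =>
    rw [Finset.inf_insert, Finset.card_insert_of_notMem hnotmem]
    calc (f a ⊓ t.inf f).index ≤ (f a).index * (t.inf f).index := Subgroup.index_inf_le
    _ ≤ b * b ^ t.card := Nat.mul_le_mul (hb a (Finset.mem_insert_self a t))
        (ih fun x hx => hb x (Finset.mem_insert_of_mem hx))
    _ = b ^ (t.card + 1) := by rw [pow_succ, mul_comm]

/-! ### The quantitative bound for finite groups -/

/-- The bound function. -/
def Fbound (m : ℕ) : ℕ :=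
  Subgroup.cardCommutatorBound m * Subgroup.cardCommutatorBound ((m ^ m) ^ 2)

theorem cardCommutatorBound_mono {a b : ℕ} (hab : a ≤ b) :
    Subgroup.cardCommutatorBound a ≤ Subgroup.cardCommutatorBound b := by
  unfold Subgroup.cardCommutatorBound
  rcases Nat.eq_zero_or_pos a with rfl | ha
  · rcases Nat.eq_zero_or_pos b with rfl | hb
    · exact le_rfl
    · have h1 : (0 : ℕ) ^ (2 * 0) = 1 := by norm_num
      rw [h1, one_pow]
      exact Nat.one_le_pow _ _ (Nat.pow_pos hb)
  · have h1 : 1 ≤ a := ha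
    have hbase : a ^ (2 * a) ≤ b ^ (2 * b) :=
      le_trans (Nat.pow_le_pow_left hab _)
        (Nat.pow_le_pow_right (le_trans h1 hab) (by omega))
    have hexp : a ^ (2 * a + 1) + 1 ≤ b ^ (2 * b + 1) + 1 := by
      have := le_trans (Nat.pow_le_pow_left hab (2 * a + 1))
        (Nat.pow_le_pow_right (le_trans h1 hab) (show 2 * a + 1 ≤ 2 * b + 1 by omega))
      omega
    calc (a ^ (2 * a)) ^ (a ^ (2 * a + 1) + 1)
        ≤ (b ^ (2 * b)) ^ (a ^ (2 * a + 1) + 1) := Nat.pow_le_pow_left hbase _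
    _ ≤ (b ^ (2 * b)) ^ (b ^ (2 * b + 1) + 1) :=
        Nat.pow_le_pow_right (Nat.one_le_pow _ _ (by omega)) hexp

section FiniteBound

variable {d n h : ℕ}

theorem closure_woValues_normal (G : Type*) [Group G] :
    (Subgroup.closure (woValues G d n h)).Normal := by
  constructor
  intro x hx g
  have hmapeq : Subgroup.map (MulAut.conj g).toMonoidHom
      (Subgroup.closure (woValues G d n h)) = Subgroup.closure (woValues G d n h) := by
    rw [MonoidHom.map_closure]
    congr 1
    ext z
    constructor
    · rintro ⟨w, hw, rfl⟩
      have h1 : (MulAut.conj g).toMonoidHom w = g * w * g⁻¹ := rfl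
      rw [h1]
      exact conj_mem_woValues d n h hw g
    · intro hz
      refine ⟨g⁻¹ * z * g, ?_, ?_⟩
      · have h2 : g⁻¹ * z * g = g⁻¹ * z * (g⁻¹)⁻¹ := by rw [inv_inv]
        rw [h2]
        exact conj_mem_woValues d n h hz g⁻¹
      · show g * (g⁻¹ * z * g) * g⁻¹ = z
        group
  rw [← hmapeq]
  exact ⟨x, hx, rfl⟩

theorem closure_woValues_eq_commutator (hh : h % 10 = 1) (Q : Type*) [Group Q] [Finite Q] :
    Subgroup.closure (woValues Q d n h) = _root_.commutator Q := by
  apply le_antisymm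
  · rw [Subgroup.closure_le]
    exact woValues_subset_commutator d n h
  · set Hs := Subgroup.closure (woValues Q d n h) with hHs
    haveI : Hs.Normal := closure_woValues_normal Q
    have hwoq : ∀ x y : Q ⧸ Hs, wo d n h x y = 1 := by
      intro x y
      obtain ⟨x, rfl⟩ := QuotientGroup.mk_surjective x
      obtain ⟨y, rfl⟩ := QuotientGroup.mk_surjective y
      have hmap := wo_map d n h (QuotientGroup.mk' Hs) x y
      have h1 : (QuotientGroup.mk' Hs) (wo d n h x y) = 1 :=
        (QuotientGroup.eq_one_iff _).mpr (Subgroup.subset_closure ⟨x, y, rfl⟩)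
      rw [h1] at hmap
      exact hmap.symm
    have habel := factA hh (Q ⧸ Hs) hwoq
    rw [commutator_def, Subgroup.commutator_le]
    intro p _ q _
    rw [← QuotientGroup.eq_one_iff]
    have hc : ((⁅p, q⁆ : Q) : Q ⧸ Hs) = ⁅(p : Q ⧸ Hs), (q : Q ⧸ Hs)⁆ :=
      map_commutatorElement (QuotientGroup.mk' Hs) p q
    rw [hc]
    exact commutatorElement_eq_one_iff_commute.mpr (habel _ _)

theorem finite_bound (hh : h % 10 = 1) (Q : Type*) [Group Q] [Finite Q]
    {m : ℕ} (hm : Nat.card (woValues Q d n h) ≤ m) :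
    Nat.card (Subgroup.closure (woValues Q d n h)) ≤ Fbound m := by
  classical
  set W := woValues Q d n h with hW
  have hm1 : 1 ≤ m := by
    have h1 : 0 < Nat.card W := @Nat.card_pos _ ⟨⟨1, one_mem_woValues d n h⟩⟩ _
    omega
  set Hs := Subgroup.closure W with hHs
  haveI hHnormal : Hs.Normal := closure_woValues_normal Q
  have hHcomm : Hs = _root_.commutator Q := closure_woValues_eq_commutator hh Q
  -- Step 1: each wo-value has a small centralizer index
  have hcentindex : ∀ w ∈ W, (Subgroup.centralizer {w}).index ≤ m := by
    intro w hw
    set C := Subgroup.centralizer {w} with hC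
    have hwd : ∀ a b : Q, QuotientGroup.leftRel C a b → a * w * a⁻¹ = b * w * b⁻¹ := by
      intro a b hab
      rw [QuotientGroup.leftRel_apply] at hab
      have hc : (a⁻¹ * b) * w = w * (a⁻¹ * b) := Subgroup.mem_centralizer_singleton_iff.mp hab
      calc a * w * a⁻¹ = a * (w * (a⁻¹ * b)) * b⁻¹ := by group
      _ = a * ((a⁻¹ * b) * w) * b⁻¹ := by rw [hc]
      _ = b * w * b⁻¹ := by group
    let j : Q ⧸ C → ↥W := fun q => Quotient.liftOn' q
      (fun a => (⟨a * w * a⁻¹, conj_mem_woValues d n h hw a⟩ : ↥W))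
      (fun a b hab => Subtype.ext (hwd a b hab))
    have hjinj : Function.Injective j := by
      intro q q'
      induction q using Quotient.inductionOn'
      induction q' using Quotient.inductionOn'
      rename_i a b
      intro hab
      have h2 : a * w * a⁻¹ = b * w * b⁻¹ := congrArg Subtype.val hab
      have h3 : (a⁻¹ * b) * w = w * (a⁻¹ * b) := by
        calc (a⁻¹ * b) * w = a⁻¹ * (b * w * b⁻¹) * b := by group
        _ = a⁻¹ * (a * w * a⁻¹) * b := by rw [h2]
        _ = w * (a⁻¹ * b) := by group
      exact (QuotientGroup.eq (s := C)).mpr (Subgroup.mem_centralizer_singleton_iff.mpr h3)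
    calc C.index = Nat.card (Q ⧸ C) := rfl
    _ ≤ Nat.card ↥W := Nat.card_le_card_of_injective j hjinj
    _ ≤ m := hm
  have hWfin : W.Finite := Set.toFinite W
  -- Step 2: the centralizer of all wo-values has index at most `m ^ m`
  set ZW := Subgroup.centralizer W with hZW
  have hZWindex : ZW.index ≤ m ^ m := by
    set Z := hWfin.toFinset.inf (fun w => Subgroup.centralizer {w}) with hZ
    have hZle : Z ≤ ZW := by
      intro z hz
      rw [hZW, Subgroup.mem_centralizer_iff]
      intro w hw
      have h4 : z ∈ Subgroup.centralizer {w} :=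
        (Finset.inf_le (hWfin.mem_toFinset.mpr hw) : Z ≤ _) hz
      exact (Subgroup.mem_centralizer_singleton_iff.mp h4).symm
    have h1 := index_finset_inf_le hWfin.toFinset (fun w => Subgroup.centralizer {w}) m
      (fun w hw => hcentindex w (hWfin.mem_toFinset.mp hw))
    have h2 : hWfin.toFinset.card ≤ m := by
      have h3 : W.ncard = hWfin.toFinset.card := Set.ncard_eq_toFinset_card W hWfin
      have h4 : Nat.card ↥W = W.ncard := Nat.card_coe_set_eq W
      omega
    have h5 : Z.index ≤ m ^ m :=
      le_trans h1 (Nat.pow_le_pow_right hm1 h2)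
    have h6 : ZW.index ∣ Z.index := Subgroup.index_dvd_of_le hZle
    have h7 : Z.index ≠ 0 := Subgroup.index_ne_zero_of_finite
    exact le_trans (Nat.le_of_dvd (Nat.pos_of_ne_zero h7) h6) h5
  haveI hZWnormal : ZW.Normal := by
    constructor
    intro z hz g
    rw [hZW, Subgroup.mem_centralizer_iff] at hz ⊢
    intro w hw
    have hw' : g⁻¹ * w * g ∈ W := by
      have h2 : g⁻¹ * w * g = g⁻¹ * w * (g⁻¹)⁻¹ := by rw [inv_inv]
      rw [h2]
      exact conj_mem_woValues d n h hw g⁻¹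
    have hzw := hz (g⁻¹ * w * g) hw'
    calc w * (g * z * g⁻¹) = g * ((g⁻¹ * w * g) * z) * g⁻¹ := by group
    _ = g * (z * (g⁻¹ * w * g)) * g⁻¹ := by rw [hzw]
    _ = (g * z * g⁻¹) * w := by group
  -- Step 3: the center of `Hs` has index at most `m ^ m`
  have hZsub : ZW.subgroupOf Hs ≤ Subgroup.center ↥Hs := by
    intro z hz
    rw [Subgroup.mem_subgroupOf] at hz
    rw [Subgroup.mem_center_iff]
    intro a
    have hle : Hs ≤ Subgroup.centralizer {(z : Q)} := by
      show Subgroup.closure W ≤ Subgroup.centralizer {(z : Q)}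
      rw [Subgroup.closure_le]
      intro w hw
      exact SetLike.mem_coe.mpr (Subgroup.mem_centralizer_singleton_iff.mpr
        (Subgroup.mem_centralizer_iff.mp hz w hw))
    have hcomm : (a : Q) * (z : Q) = (z : Q) * (a : Q) :=
      Subgroup.mem_centralizer_singleton_iff.mp (hle a.2)
    exact Subtype.ext (by simpa using hcomm)
  have hcenterindex : (Subgroup.center ↥Hs).index ≤ m ^ m := by
    have h1 : (Subgroup.center ↥Hs).index ∣ (ZW.subgroupOf Hs).index :=
      Subgroup.index_dvd_of_le hZsub
    have h2 : ZW.relIndex Hs ∣ ZW.index :=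
      Subgroup.relIndex_dvd_index_of_normal ZW Hs
    have h3 : (ZW.subgroupOf Hs).index ≠ 0 := Subgroup.index_ne_zero_of_finite
    have h4 : ZW.index ≠ 0 := Subgroup.index_ne_zero_of_finite
    have h5 : (ZW.subgroupOf Hs).index ≤ ZW.index :=
      Nat.le_of_dvd (Nat.pos_of_ne_zero h4) h2
    have h6 : (Subgroup.center ↥Hs).index ≤ (ZW.subgroupOf Hs).index :=
      Nat.le_of_dvd (Nat.pos_of_ne_zero h3) h1
    omega
  -- Step 4: the commutator subgroup of `Hs` is small
  have hcommset : Nat.card (commutatorSet ↥Hs) ≤ (m ^ m) ^ 2 :=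
    le_trans (card_commutatorSet_le_index_center_sq ↥Hs)
      (Nat.pow_le_pow_left hcenterindex 2)
  have hKbound : Nat.card (_root_.commutator ↥Hs) ≤
      Subgroup.cardCommutatorBound ((m ^ m) ^ 2) :=
    le_trans (Subgroup.card_commutator_le_of_finite_commutatorSet ↥Hs)
      (cardCommutatorBound_mono hcommset)
  -- Step 5: relate to `K = ⁅Hs, Hs⁆`
  set K : Subgroup Q := ⁅Hs, Hs⁆ with hK
  haveI hKnormal : K.Normal := Subgroup.commutator_normal Hs Hs
  have hKle : K ≤ Hs := Subgroup.commutator_le_left Hs Hs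
  have hKmap : Subgroup.map Hs.subtype (_root_.commutator ↥Hs) = K := by
    rw [commutator_def, Subgroup.map_commutator]
    congr 1 <;>
    · rw [← MonoidHom.range_eq_map]
      exact Subgroup.range_subtype Hs
  have hKcard : Nat.card K ≤ Subgroup.cardCommutatorBound ((m ^ m) ^ 2) := by
    rw [← hKmap]
    have hcardeq : Nat.card (Subgroup.map Hs.subtype (_root_.commutator ↥Hs)) =
        Nat.card (_root_.commutator ↥Hs) :=
      (Nat.card_congr ((_root_.commutator ↥Hs).equivMapOfInjective _
        (Subgroup.subtype_injective Hs)).toEquiv).symm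
    rw [hcardeq]
    exact hKbound
  -- Step 6: the quotient `Q ⧸ K` is metabelian and its commutator subgroup is small
  have hmbar : ∀ a b c e : Q ⧸ K, Commute ⁅a, b⁆ ⁅c, e⁆ := by
    intro a b c e
    obtain ⟨a, rfl⟩ := QuotientGroup.mk_surjective a
    obtain ⟨b, rfl⟩ := QuotientGroup.mk_surjective b
    obtain ⟨c, rfl⟩ := QuotientGroup.mk_surjective c
    obtain ⟨e, rfl⟩ := QuotientGroup.mk_surjective e
    rw [← commutatorElement_eq_one_iff_commute]
    have h1 : ⁅a, b⁆ ∈ Hs := by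
      rw [hHcomm]
      exact Subgroup.commutator_mem_commutator (Subgroup.mem_top a) (Subgroup.mem_top b)
    have h2 : ⁅c, e⁆ ∈ Hs := by
      rw [hHcomm]
      exact Subgroup.commutator_mem_commutator (Subgroup.mem_top c) (Subgroup.mem_top e)
    have h3 : ⁅⁅a, b⁆, ⁅c, e⁆⁆ ∈ K := Subgroup.commutator_mem_commutator h1 h2
    have h4 : ((⁅⁅a, b⁆, ⁅c, e⁆⁆ : Q) : Q ⧸ K) =
        ⁅⁅(a : Q ⧸ K), (b : Q ⧸ K)⁆, ⁅(c : Q ⧸ K), (e : Q ⧸ K)⁆⁆ := by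
      have t1 := map_commutatorElement (QuotientGroup.mk' K) ⁅a, b⁆ ⁅c, e⁆
      have t2 := map_commutatorElement (QuotientGroup.mk' K) a b
      have t3 := map_commutatorElement (QuotientGroup.mk' K) c e
      rw [t2, t3] at t1
      exact t1
    rw [← h4]
    exact (QuotientGroup.eq_one_iff _).mpr h3
  have hvalbar : Nat.card (woValues (Q ⧸ K) d n h) ≤ m := by
    rw [woValues_image_surjective d n h (QuotientGroup.mk' K) (QuotientGroup.mk'_surjective K)]
    exact le_trans (Nat.card_image_le hWfin) hm
  have hcsbar : commutatorSet (Q ⧸ K) = woValues (Q ⧸ K) d n h := by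
    ext g
    constructor
    · rintro ⟨a, b, rfl⟩
      exact ⟨a, b, wo_eq_commutator hmbar hh a b⟩
    · rintro ⟨x, y, rfl⟩
      exact ⟨x, y, (wo_eq_commutator hmbar hh x y).symm⟩
  have hbar : Nat.card (_root_.commutator (Q ⧸ K)) ≤ Subgroup.cardCommutatorBound m := by
    refine le_trans (Subgroup.card_commutator_le_of_finite_commutatorSet (Q ⧸ K))
      (cardCommutatorBound_mono ?_)
    rw [hcsbar]
    exact hvalbar
  -- Step 7: put everything together
  let ψ : ↥Hs →* Q ⧸ K := (QuotientGroup.mk' K).comp Hs.subtype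
  have hker : ψ.ker = K.subgroupOf Hs := by
    ext x
    rw [MonoidHom.mem_ker, Subgroup.mem_subgroupOf]
    exact QuotientGroup.eq_one_iff _
  have hrange : ψ.range = Subgroup.map (QuotientGroup.mk' K) Hs := by
    rw [MonoidHom.range_comp]
    congr 1
    exact Subgroup.range_subtype Hs
  have hsplit : Nat.card ↥Hs = Nat.card (↥Hs ⧸ ψ.ker) * Nat.card ψ.ker :=
    Subgroup.card_eq_card_quotient_mul_card_subgroup ψ.ker
  have hquot : Nat.card (↥Hs ⧸ ψ.ker) = Nat.card ψ.range :=
    Nat.card_congr (QuotientGroup.quotientKerEquivRange ψ).toEquiv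
  have hkercard : Nat.card ψ.ker ≤ Subgroup.cardCommutatorBound ((m ^ m) ^ 2) := by
    rw [hker]
    have h1 : Nat.card (K.subgroupOf Hs) = Nat.card K :=
      Nat.card_congr (Subgroup.subgroupOfEquivOfLe hKle).toEquiv
    rw [h1]
    exact hKcard
  have hrangecard : Nat.card ψ.range ≤ Subgroup.cardCommutatorBound m := by
    rw [hrange]
    have h1 : Subgroup.map (QuotientGroup.mk' K) Hs = _root_.commutator (Q ⧸ K) := by
      rw [hHcomm, commutator_def, commutator_def, Subgroup.map_commutator,
        Subgroup.map_top_of_surjective _ (QuotientGroup.mk'_surjective K)]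
    rw [h1]
    exact hbar
  calc Nat.card ↥Hs = Nat.card (↥Hs ⧸ ψ.ker) * Nat.card ψ.ker := hsplit
  _ = Nat.card ψ.range * Nat.card ψ.ker := by rw [hquot]
  _ ≤ Subgroup.cardCommutatorBound m * Subgroup.cardCommutatorBound ((m ^ m) ^ 2) :=
      Nat.mul_le_mul hrangecard hkercard
  _ = Fbound m := rfl

end FiniteBound

/-! ### Finite infima of normal / finite-index subgroups -/

theorem finset_inf_normal {G : Type*} [Group G] {α : Type*} (s : Finset α)
    (f : α → Subgroup G) (hf : ∀ a ∈ s, (f a).Normal) : (s.inf f).Normal := by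
  classical
  induction s using Finset.induction_on with
  | empty =>
    rw [Finset.inf_empty]
    infer_instance
  | insert a t hnot ih =>
    rw [Finset.inf_insert]
    haveI := hf a (Finset.mem_insert_self a t)
    haveI := ih fun x hx => hf x (Finset.mem_insert_of_mem hx)
    infer_instance

theorem finset_inf_finiteIndex {G : Type*} [Group G] {α : Type*} (s : Finset α)
    (f : α → Subgroup G) (hf : ∀ a ∈ s, (f a).FiniteIndex) : (s.inf f).FiniteIndex := by
  classical
  induction s using Finset.induction_on with
  | empty =>
    rw [Finset.inf_empty]
    infer_instance
  | insert a t hnot ih =>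
    rw [Finset.inf_insert]
    haveI := hf a (Finset.mem_insert_self a t)
    haveI := ih fun x hx => hf x (Finset.mem_insert_of_mem hx)
    infer_instance

/-- The word `w_o` is boundedly concise in residually finite groups: there
is `f : ℕ → ℕ` such that if a residually finite group `G` has at most `m` `w_o`-values,
then the verbal subgroup `w_o(G)` is finite of order at most `f m`. -/
theorem stmt12 (d n h : ℕ) (hd : 0 < d) (hn : 0 < n) (hh : h % 10 = 1)
    (hh' : 50000 < h) :
    ∃ f : ℕ → ℕ, ∀ (m : ℕ) (G : Type*) [Group G], ResiduallyFinite G →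
      (woValues G d n h).Finite → Nat.card (woValues G d n h) ≤ m →
      Finite ↥(Subgroup.closure (woValues G d n h)) ∧
        Nat.card ↥(Subgroup.closure (woValues G d n h)) ≤ f m := by
  classical
  refine ⟨Fbound, ?_⟩
  intro m G _ hRF hWfin hm
  -- Key claim: any finset inside the verbal subgroup has at most `Fbound m` elements.
  have hkey : ∀ s : Finset G, ↑s ⊆ (Subgroup.closure (woValues G d n h) : Set G) →
      s.card ≤ Fbound m := by
    intro s hs
    by_contra hcard
    push_neg at hcard
    have hsep : ∀ p : G × G, ∃ N : Subgroup G, N.Normal ∧ N.FiniteIndex ∧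
        (p.1 ≠ p.2 → p.1⁻¹ * p.2 ∉ N) := by
      intro p
      by_cases hp : p.1 = p.2
      · exact ⟨⊤, inferInstance, inferInstance, fun hc => absurd hp hc⟩
      · obtain ⟨N, hN1, hN2, hN3⟩ := hRF (p.1⁻¹ * p.2) (by
          intro hc
          apply hp
          rw [inv_mul_eq_one] at hc
          exact hc)
        exact ⟨N, hN1, hN2, fun _ => hN3⟩
    choose Nf hNf1 hNf2 hNf3 using hsep
    set P : Finset (G × G) := (s ×ˢ s).filter (fun p => p.1 ≠ p.2) with hP
    set Kn : Subgroup G := P.inf Nf with hKn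
    haveI hKnormal : Kn.Normal := finset_inf_normal P Nf fun p _ => hNf1 p
    haveI hKfi : Kn.FiniteIndex := finset_inf_finiteIndex P Nf fun p _ => hNf2 p
    haveI hQfin : Finite (G ⧸ Kn) :=
      Nat.finite_of_card_ne_zero hKfi.index_ne_zero
    -- the quotient has at most `m` values, so its verbal subgroup is small
    have hq : Nat.card (woValues (G ⧸ Kn) d n h) ≤ m := by
      rw [woValues_image_surjective d n h (QuotientGroup.mk' Kn)
        (QuotientGroup.mk'_surjective Kn)]
      exact le_trans (Nat.card_image_le hWfin) hm
    have hqb := finite_bound hh (G ⧸ Kn) hq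
    -- `s` injects into the quotient
    have hinj : Set.InjOn (fun g : G => ((g : G ⧸ Kn))) ↑s := by
      intro a ha b hb hab
      by_contra hne
      have hPmem : (a, b) ∈ P := Finset.mem_filter.mpr
        ⟨Finset.mem_product.mpr ⟨Finset.mem_coe.mp ha, Finset.mem_coe.mp hb⟩, hne⟩
      have h3 : a⁻¹ * b ∈ Kn := QuotientGroup.eq.mp hab
      have h4 : a⁻¹ * b ∈ Nf (a, b) := (Finset.inf_le hPmem : Kn ≤ Nf (a, b)) h3
      exact hNf3 (a, b) hne h4
    -- the image of `s` sits inside the verbal subgroup of the quotient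
    have hmapcl : Subgroup.map (QuotientGroup.mk' Kn) (Subgroup.closure (woValues G d n h)) =
        Subgroup.closure (woValues (G ⧸ Kn) d n h) := by
      rw [MonoidHom.map_closure]
      congr 1
      exact (woValues_image_surjective d n h (QuotientGroup.mk' Kn)
        (QuotientGroup.mk'_surjective Kn)).symm
    have hsub2 : ((s.image (fun g : G => ((g : G ⧸ Kn)))) : Set (G ⧸ Kn)) ⊆
        (Subgroup.closure (woValues (G ⧸ Kn) d n h) : Set (G ⧸ Kn)) := by
      intro x hx
      obtain ⟨g, hg, rfl⟩ := Finset.mem_image.mp (Finset.mem_coe.mp hx)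
      rw [← hmapcl]
      exact ⟨g, hs (Finset.mem_coe.mpr hg), rfl⟩
    have hc1 : s.card = (s.image (fun g : G => ((g : G ⧸ Kn)))).card :=
      (Finset.card_image_of_injOn hinj).symm
    have hc2 : (s.image (fun g : G => ((g : G ⧸ Kn)))).card ≤
        Nat.card (Subgroup.closure (woValues (G ⧸ Kn) d n h)) := by
      have h5 := Nat.card_mono (Set.toFinite
        (Subgroup.closure (woValues (G ⧸ Kn) d n h) : Set (G ⧸ Kn))) hsub2
      have h6 : Nat.card ((s.image (fun g : G => ((g : G ⧸ Kn)))) : Set (G ⧸ Kn)) =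
          (s.image (fun g : G => ((g : G ⧸ Kn)))).card := by
        rw [Nat.card_coe_set_eq, Set.ncard_coe_finset]
      have h9 : Nat.card ((Subgroup.closure (woValues (G ⧸ Kn) d n h) : Set (G ⧸ Kn))) =
          Nat.card (Subgroup.closure (woValues (G ⧸ Kn) d n h)) := rfl
      omega
    omega
  -- Finiteness of the verbal subgroup
  have hfin : (Subgroup.closure (woValues G d n h) : Set G).Finite := by
    by_contra hinf
    have hinf' : (Subgroup.closure (woValues G d n h) : Set G).Infinite := hinf
    obtain ⟨t, hts, htcard⟩ := hinf'.exists_subset_card_eq (Fbound m + 1)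
    have := hkey t hts
    omega
  refine ⟨hfin.to_subtype, ?_⟩
  have hb := hkey hfin.toFinset (by rw [Set.Finite.coe_toFinset])
  have h7 : Nat.card (Subgroup.closure (woValues G d n h)) =
      (Subgroup.closure (woValues G d n h) : Set G).ncard :=
    Nat.card_coe_set_eq _
  have h8 : (Subgroup.closure (woValues G d n h) : Set G).ncard = hfin.toFinset.card :=
    Set.ncard_eq_toFinset_card _ hfin
  omega
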